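/- Let ψ be the characteristic exponent of a Lévy process and let R ≤ R' with ∫_{|x|>1}(e^{-Rx}+e^{-R'x}) ν(dx) < ∞. Then there exist constants C₁ ∈ ℝ and C₂ > 0 such that for all complex u with Im u ∈ [R,R']: Re ψ(u) ≤ C₁ + C₂ Re ψ(Re u). -/

import Mathlib

open MeasureTheory

namespace Stmt10Aux

lemma L1 {M y : ℝ} (hM : 0 ≤ M) (hy : |y| ≤ M) :
    Real.exp y - 1 - y ≤ 3 * Real.exp M * y ^ 2 := by
  have hEM : (1:ℝ) ≤ Real.exp M := Real.one_le_exp hM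
  rcases le_or_gt |y| 1 with h | h
  · have := Real.abs_exp_sub_one_sub_id_le h
    have h2 : Real.exp y - 1 - y ≤ y ^ 2 := (le_abs_self _).trans this
    nlinarith [sq_nonneg y]
  · have h1 : Real.exp y ≤ Real.exp M := Real.exp_le_exp.mpr ((le_abs_self y).trans hy)
    have h2 : -y ≤ M := (neg_le_abs y).trans hy
    have h3 : M ≤ Real.exp M := by linarith [Real.add_one_le_exp M]
    have h4 : 1 ≤ y ^ 2 := by nlinarith [_root_.sq_abs y]
    nlinarith

lemma L2 (u : ℂ) {x : ℝ} (hx : |x| ≤ 1) :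
    ‖Complex.exp (Complex.I * u * x) - 1 - Complex.I * u * x‖ ≤
      3 * Real.exp (‖u‖) * (‖u‖ ^ 2 + 1) * x ^ 2 := by
  set z := Complex.I * u * x with hz
  have hzabs : ‖z‖ = ‖u‖ * |x| := by
    simp [hz, map_mul, Complex.norm_real]
  have hEu : (1:ℝ) ≤ Real.exp (‖u‖) := Real.one_le_exp (norm_nonneg u)
  have hzu : ‖z‖ ≤ ‖u‖ := by
    rw [hzabs]
    calc ‖u‖ * |x| ≤ ‖u‖ * 1 :=
          mul_le_mul_of_nonneg_left hx (norm_nonneg u)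
      _ = _ := mul_one _
  rcases le_or_gt (‖z‖) 1 with h | h
  · have := Complex.norm_exp_sub_one_sub_id_le h
    calc ‖Complex.exp z - 1 - z‖ ≤ ‖z‖ ^ 2 := this
      _ = ‖u‖ ^ 2 * x ^ 2 := by rw [hzabs]; rw [mul_pow, _root_.sq_abs]
      _ ≤ 3 * Real.exp (‖u‖) * (‖u‖ ^ 2 + 1) * x ^ 2 := by
          nlinarith [sq_nonneg x, sq_nonneg (‖u‖), norm_nonneg u,
            mul_nonneg (sq_nonneg (‖u‖)) (sq_nonneg x),
            Real.one_le_exp (norm_nonneg u)]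
  · have hx2 : 1 ≤ (‖u‖ ^ 2 + 1) * x ^ 2 := by
      nlinarith [hzabs ▸ h, norm_nonneg u, abs_nonneg x, _root_.sq_abs x, sq_nonneg x]
    have hb : ‖Complex.exp z - 1 - z‖ ≤
        Real.exp (‖u‖) + 1 + ‖u‖ := by
      calc ‖Complex.exp z - 1 - z‖ ≤
            ‖Complex.exp z - 1‖ + ‖z‖ := by
              simpa using norm_sub_le (Complex.exp z - 1) z
        _ ≤ ‖Complex.exp z‖ + 1 + ‖z‖ := by
              have := norm_sub_le (Complex.exp z) 1
              simp only [norm_one] at this; linarith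
        _ ≤ Real.exp (‖u‖) + 1 + ‖u‖ := by
              have h1 : ‖Complex.exp z‖ = Real.exp z.re := Complex.norm_exp z
              have h2 : z.re ≤ ‖z‖ := Complex.re_le_norm z
              have : Real.exp z.re ≤ Real.exp (‖u‖) :=
                Real.exp_le_exp.mpr (h2.trans hzu)
              linarith
    have h3 : ‖u‖ ≤ Real.exp (‖u‖) :=
      (le_add_of_nonneg_left zero_le_one).trans
        (by linarith [Real.add_one_le_exp (‖u‖)])
    calc ‖Complex.exp z - 1 - z‖ ≤ Real.exp (‖u‖) + 1 + ‖u‖ := hb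
      _ ≤ 3 * Real.exp (‖u‖) := by linarith
      _ = 3 * Real.exp (‖u‖) * 1 := (mul_one _).symm
      _ ≤ 3 * Real.exp (‖u‖) * ((‖u‖ ^ 2 + 1) * x ^ 2) := by
          apply mul_le_mul_of_nonneg_left hx2; positivity
      _ = 3 * Real.exp (‖u‖) * (‖u‖ ^ 2 + 1) * x ^ 2 := by ring

lemma expstrip {R R' b : ℝ} (hb1 : R ≤ b) (hb2 : b ≤ R') (x : ℝ) :
    Real.exp (-b * x) ≤ Real.exp (-R * x) + Real.exp (-R' * x) := by
  rcases le_or_gt 0 x with h | h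
  · have : Real.exp (-b * x) ≤ Real.exp (-R * x) := by
      apply Real.exp_le_exp.mpr; nlinarith
    linarith [Real.exp_pos (-R' * x)]
  · have : Real.exp (-b * x) ≤ Real.exp (-R' * x) := by
      apply Real.exp_le_exp.mpr; nlinarith
    linarith [Real.exp_pos (-R * x)]

lemma Gint (R R' c d : ℝ) (ν : Measure ℝ)
    (hνint : Integrable (fun x => min (x ^ 2) 1) ν)
    (hνexp : Integrable (fun x => Real.exp (-R * x) + Real.exp (-R' * x))
      (ν.restrict {x : ℝ | 1 < |x|})) :
    Integrable (fun x => if |x| ≤ 1 then c * x ^ 2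
      else Real.exp (-R * x) + Real.exp (-R' * x) + d) ν := by
  have hs : MeasurableSet {x : ℝ | 1 < |x|} :=
    measurableSet_lt measurable_const measurable_abs
  have h2 : Integrable ({x : ℝ | 1 < |x|}.indicator
      (fun x => Real.exp (-R * x) + Real.exp (-R' * x))) ν :=
    (integrable_indicator_iff hs).mpr hνexp
  have h1 : Integrable (fun x : ℝ => if |x| ≤ 1 then c * x ^ 2 else d) ν := by
    apply Integrable.mono' (hνint.const_mul (|c| + |d|))
    · apply Measurable.aestronglyMeasurable
      exact Measurable.ite (measurableSet_le measurable_abs measurable_const)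
        ((measurable_id.pow_const 2).const_mul c) measurable_const
    · filter_upwards with x
      by_cases h : |x| ≤ 1
      · have hx2 : x ^ 2 ≤ 1 := by nlinarith [_root_.sq_abs x, abs_nonneg x]
        have hmin : min (x ^ 2) 1 = x ^ 2 := min_eq_left hx2
        simp only [h, if_true, Real.norm_eq_abs, hmin, abs_mul]
        rw [_root_.abs_of_nonneg (sq_nonneg x)]
        nlinarith [abs_nonneg c, abs_nonneg d, sq_nonneg x, le_abs_self c]
      · have hmin : min (x ^ 2) 1 = 1 := min_eq_right
          (by nlinarith [_root_.sq_abs x, abs_nonneg x])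
        simp only [h, if_false, Real.norm_eq_abs, hmin]
        have := abs_nonneg c
        have := le_abs_self d
        linarith
  have heq : (fun x : ℝ => if |x| ≤ 1 then c * x ^ 2
      else Real.exp (-R * x) + Real.exp (-R' * x) + d) =
      (fun x : ℝ => if |x| ≤ 1 then c * x ^ 2 else d) +
      ({x : ℝ | 1 < |x|}.indicator (fun x => Real.exp (-R * x) + Real.exp (-R' * x))) := by
    funext x
    by_cases h : |x| ≤ 1
    · have hnot : x ∉ {x : ℝ | 1 < |x|} := by simp [Set.mem_setOf_eq]; linarith
      simp [h, Set.indicator_of_notMem hnot]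
    · have hmem : x ∈ {x : ℝ | 1 < |x|} := by
        simp only [Set.mem_setOf_eq]; linarith [lt_of_not_ge h]
      simp [h, Set.indicator_of_mem hmem]
      ring
  rw [heq]
  exact h1.add h2

lemma keyptw {R R' b : ℝ} (hb1 : R ≤ b) (hb2 : b ≤ R') (t x : ℝ)
    (hexp : Real.exp (-b * x) ≤ Real.exp (-R * x) + Real.exp (-R' * x)) :
    Real.exp (-b * x) * Real.cos (t * x) - 1 + (if |x| ≤ 1 then b * x else 0) ≤
      (1/2) * (Real.cos (t * x) - 1) +
      (if |x| ≤ 1 then (3 * (max |R| |R'|) ^ 2 * Real.exp (max |R| |R'|)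
          + (max |R| |R'|) ^ 2) * x ^ 2
        else Real.exp (-R * x) + Real.exp (-R' * x) + 1) := by
  set M := max |R| |R'| with hM
  have hM0 : 0 ≤ M := le_trans (abs_nonneg R) (le_max_left _ _)
  have hbM : |b| ≤ M := by
    rw [abs_le]
    refine ⟨?_, hb2.trans ((le_abs_self R').trans (le_max_right _ _))⟩
    calc -M ≤ -|R| := neg_le_neg (le_max_left _ _)
      _ ≤ R := neg_abs_le R
      _ ≤ b := hb1
  have hc1 : Real.cos (t * x) ≤ 1 := Real.cos_le_one _
  have hc2 : -1 ≤ Real.cos (t * x) := Real.neg_one_le_cos _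
  by_cases h : |x| ≤ 1
  · simp only [h, if_true]
    set y := -b * x with hy
    set c := Real.cos (t * x) with hcdef
    have hyM : |y| ≤ M := by
      rw [hy, abs_mul, abs_neg]
      calc |b| * |x| ≤ M * 1 := mul_le_mul hbM h (abs_nonneg x) hM0
        _ = M := mul_one M
    have hy2 : y ^ 2 ≤ M ^ 2 * x ^ 2 := by
      have hyb : y ^ 2 = b ^ 2 * x ^ 2 := by rw [hy]; ring
      rw [hyb]
      have hbsq : b ^ 2 ≤ M ^ 2 := by
        nlinarith [_root_.sq_abs b, abs_nonneg b]
      nlinarith [sq_nonneg x]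
    have hE0 : 0 ≤ Real.exp y - 1 - y := by linarith [Real.add_one_le_exp y]
    have hE1 : Real.exp y - 1 - y ≤ 3 * Real.exp M * y ^ 2 := L1 hM0 hyM
    have hid : Real.exp (-b * x) * c - 1 + b * x =
        (Real.exp y - 1 - y) * c + (-y) * (1 - c) + (c - 1) := by
      rw [hy]; ring
    rw [hid]
    have ht1 : (Real.exp y - 1 - y) * c ≤ 3 * Real.exp M * (M ^ 2 * x ^ 2) := by
      have hmc : (Real.exp y - 1 - y) * c ≤ (Real.exp y - 1 - y) * 1 :=
        mul_le_mul_of_nonneg_left hc1 hE0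
      have hEM : (0:ℝ) < Real.exp M := Real.exp_pos M
      nlinarith
    have ht2 : (-y) * (1 - c) ≤ M ^ 2 * x ^ 2 + (1 - c) / 2 := by
      have hyabs : -y ≤ M * |x| := by
        calc -y ≤ |y| := neg_le_abs y
          _ = |b| * |x| := by rw [hy, abs_mul, abs_neg]
          _ ≤ M * |x| := mul_le_mul_of_nonneg_right hbM (abs_nonneg x)
      have h1c : 0 ≤ 1 - c := by linarith
      have h1c2 : 1 - c ≤ 2 := by linarith
      have hmul : (-y) * (1 - c) ≤ (M * |x|) * (1 - c) :=
        mul_le_mul_of_nonneg_right hyabs h1c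
      have key : (M * |x|) * (1 - c) ≤ (M * |x|) ^ 2 + (1 - c) / 2 := by
        nlinarith [sq_nonneg (M * |x| - (1 - c) / 2), mul_nonneg hM0 (abs_nonneg x)]
      have hsq : (M * |x|) ^ 2 = M ^ 2 * x ^ 2 := by rw [mul_pow, _root_.sq_abs]
      nlinarith [mul_nonneg hM0 (abs_nonneg x)]
    nlinarith [Real.exp_pos M]
  · simp only [h, if_false]
    have hE : Real.exp (-b * x) * Real.cos (t * x) ≤ Real.exp (-b * x) := by
      nlinarith [Real.exp_pos (-b * x)]
    linarith

lemma reF (u : ℂ) (x : ℝ) : (Complex.exp (Complex.I * u * x) - 1 -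
    (if |x| ≤ 1 then Complex.I * u * x else 0)).re =
    Real.exp (-u.im * x) * Real.cos (u.re * x) - 1 +
      (if |x| ≤ 1 then u.im * x else 0) := by
  have h1 : (Complex.I * u * x).re = -u.im * x := by simp
  have h2 : (Complex.I * u * x).im = u.re * x := by simp
  simp only [Complex.sub_re, Complex.exp_re, h1, h2, apply_ite Complex.re, Complex.one_re,
    Complex.zero_re]
  split <;> ring

lemma reFt (t x : ℝ) : (Complex.exp (Complex.I * (t:ℂ) * x) - 1 -
    (if |x| ≤ 1 then Complex.I * (t:ℂ) * x else 0)).re = Real.cos (t * x) - 1 := by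
  rw [reF]
  simp

lemma intF (R R' : ℝ) (ν : Measure ℝ)
    (hνint : Integrable (fun x => min (x ^ 2) 1) ν)
    (hνexp : Integrable (fun x => Real.exp (-R * x) + Real.exp (-R' * x))
      (ν.restrict {x : ℝ | 1 < |x|}))
    (u : ℂ) (hu : u.im = 0 ∨ (R ≤ u.im ∧ u.im ≤ R')) :
    Integrable (fun x : ℝ => Complex.exp (Complex.I * u * x) - 1 -
      (if |x| ≤ 1 then Complex.I * u * x else 0)) ν := by
  have hmeas : AEStronglyMeasurable (fun x : ℝ => Complex.exp (Complex.I * u * x) - 1 -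
      (if |x| ≤ 1 then Complex.I * u * x else 0)) ν := by
    apply Measurable.aestronglyMeasurable
    have hm1 : Measurable (fun x : ℝ => Complex.I * u * (x:ℂ)) :=
      measurable_const.mul Complex.measurable_ofReal
    exact ((Complex.measurable_exp.comp hm1).sub measurable_const).sub
      (Measurable.ite (measurableSet_le measurable_abs measurable_const) hm1 measurable_const)
  apply Integrable.mono' (Gint R R' (3 * Real.exp (‖u‖) * (‖u‖ ^ 2 + 1)) 2
    ν hνint hνexp) hmeas
  filter_upwards with x
  by_cases h : |x| ≤ 1
  · simp only [h, if_true]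
    exact L2 u h
  · simp only [h, if_false]
    have hre : (Complex.I * u * (x:ℂ)).re = -u.im * x := by simp
    have habs : ‖Complex.exp (Complex.I * u * x)‖ = Real.exp (-u.im * x) := by
      rw [Complex.norm_exp, hre]
    have hb : Real.exp (-u.im * x) ≤ Real.exp (-R * x) + Real.exp (-R' * x) + 1 := by
      rcases hu with h0 | ⟨hb1, hb2⟩
      · rw [h0]
        simp only [neg_zero, zero_mul, Real.exp_zero]
        linarith [Real.exp_pos (-R * x), Real.exp_pos (-R' * x)]
      · linarith [expstrip hb1 hb2 x]
    calc ‖Complex.exp (Complex.I * u * x) - 1 - 0‖ ≤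
          ‖Complex.exp (Complex.I * u * x)‖ + 1 := by
            rw [sub_zero]
            simpa using norm_sub_le (Complex.exp (Complex.I * u * x)) 1
      _ ≤ Real.exp (-R * x) + Real.exp (-R' * x) + 2 := by rw [habs]; linarith

end Stmt10Aux

open Stmt10Aux

/-- Corollary A.5 of the paper: on the strip `Im u ∈ [R,R']`,
`Re ψ(u) ≤ C₁ + C₂ Re ψ(Re u)`. -/
theorem stmt10 (a γ R R' : ℝ) (hRR : R ≤ R') (ν : Measure ℝ) (hν0 : ν {0} = 0)
    (hνint : Integrable (fun x => min (x ^ 2) 1) ν)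
    (hνexp : Integrable (fun x => Real.exp (-R * x) + Real.exp (-R' * x))
      (ν.restrict {x : ℝ | 1 < |x|}))
    (ψ : ℂ → ℂ)
    (hψ : ∀ u : ℂ, u.im ∈ Set.Icc R R' → ψ u =
      -(a:ℂ) ^ 2 * u ^ 2 / 2 + Complex.I * γ * u +
        ∫ x : ℝ, (Complex.exp (Complex.I * u * x) - 1 -
          (if |x| ≤ 1 then Complex.I * u * x else 0)) ∂ν)
    (hψreal : ∀ t : ℝ, ψ t =
      -(a:ℂ) ^ 2 * (t:ℂ) ^ 2 / 2 + Complex.I * γ * t +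
        ∫ x : ℝ, (Complex.exp (Complex.I * t * x) - 1 -
          (if |x| ≤ 1 then Complex.I * t * x else 0)) ∂ν) :
    ∃ C₁ : ℝ, ∃ C₂ > (0:ℝ), ∀ u : ℂ, u.im ∈ Set.Icc R R' →
      (ψ u).re ≤ C₁ + C₂ * (ψ (u.re : ℂ)).re := by
  set M : ℝ := max |R| |R'| with hMdef
  set C : ℝ := 3 * M ^ 2 * Real.exp M + M ^ 2 with hCdef
  set g : ℝ → ℝ := fun x => if |x| ≤ 1 then C * x ^ 2
    else Real.exp (-R * x) + Real.exp (-R' * x) + 1 with hgdef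
  have hg : Integrable g ν := Gint R R' C 1 ν hνint hνexp
  refine ⟨a ^ 2 * M ^ 2 / 2 + |γ| * M + ∫ x, g x ∂ν, 1/2, by norm_num, ?_⟩
  intro u hu
  obtain ⟨hb1, hb2⟩ := hu
  have hFu := intF R R' ν hνint hνexp u (Or.inr ⟨hb1, hb2⟩)
  have hFt := intF R R' ν hνint hνexp ((u.re : ℂ)) (Or.inl (Complex.ofReal_im u.re))
  -- re of the integrals
  have hreu : (∫ x : ℝ, (Complex.exp (Complex.I * u * x) - 1 -
      (if |x| ≤ 1 then Complex.I * u * x else 0)) ∂ν).re =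
      ∫ x : ℝ, (Complex.exp (Complex.I * u * x) - 1 -
      (if |x| ≤ 1 then Complex.I * u * x else 0)).re ∂ν := by
    have := integral_re hFu
    simp only [RCLike.re_to_complex] at this
    exact this.symm
  have hret : (∫ x : ℝ, (Complex.exp (Complex.I * (u.re:ℂ) * x) - 1 -
      (if |x| ≤ 1 then Complex.I * (u.re:ℂ) * x else 0)) ∂ν).re =
      ∫ x : ℝ, (Complex.exp (Complex.I * (u.re:ℂ) * x) - 1 -
      (if |x| ≤ 1 then Complex.I * (u.re:ℂ) * x else 0)).re ∂ν := by
    have := integral_re hFt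
    simp only [RCLike.re_to_complex] at this
    exact this.symm
  -- pointwise bound and integral comparison
  have hmono : ∫ x : ℝ, (Complex.exp (Complex.I * u * x) - 1 -
      (if |x| ≤ 1 then Complex.I * u * x else 0)).re ∂ν ≤
      ∫ x : ℝ, ((1/2) * (Complex.exp (Complex.I * (u.re:ℂ) * x) - 1 -
      (if |x| ≤ 1 then Complex.I * (u.re:ℂ) * x else 0)).re + g x) ∂ν := by
    have hiu : Integrable (fun x : ℝ => (Complex.exp (Complex.I * u * x) - 1 -
        (if |x| ≤ 1 then Complex.I * u * x else 0)).re) ν := by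
      have := hFu.re
      simpa only [RCLike.re_to_complex] using this
    have hit : Integrable (fun x : ℝ => (Complex.exp (Complex.I * (u.re:ℂ) * x) - 1 -
        (if |x| ≤ 1 then Complex.I * (u.re:ℂ) * x else 0)).re) ν := by
      have := hFt.re
      simpa only [RCLike.re_to_complex] using this
    apply integral_mono hiu ((hit.const_mul (1/2)).add hg)
    intro x
    simp only [Pi.add_apply]
    rw [reF u x, reFt u.re x]
    exact keyptw hb1 hb2 u.re x (expstrip hb1 hb2 x)
  have hit2 : Integrable (fun x : ℝ => (Complex.exp (Complex.I * (u.re:ℂ) * x) - 1 -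
      (if |x| ≤ 1 then Complex.I * (u.re:ℂ) * x else 0)).re) ν := by
    have := hFt.re
    simpa only [RCLike.re_to_complex] using this
  rw [integral_add (hit2.const_mul (1/2)) hg, integral_const_mul] at hmono
  -- polynomial part
  have hPu : (-(a:ℂ) ^ 2 * u ^ 2 / 2 + Complex.I * γ * u).re =
      -a ^ 2 * (u.re ^ 2 - u.im ^ 2) / 2 - γ * u.im := by
    simp [Complex.add_re, Complex.div_re, Complex.mul_re, Complex.mul_im, Complex.normSq, pow_two]
    ring
  have hPt : (-(a:ℂ) ^ 2 * (u.re:ℂ) ^ 2 / 2 + Complex.I * γ * (u.re:ℂ)).re =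
      -a ^ 2 * u.re ^ 2 / 2 := by
    simp [Complex.add_re, Complex.div_re, Complex.mul_re, Complex.mul_im, Complex.normSq, pow_two]
  have hbM : |u.im| ≤ M := by
    rw [abs_le]
    refine ⟨?_, hb2.trans ((le_abs_self R').trans (le_max_right _ _))⟩
    calc -M ≤ -|R| := neg_le_neg (le_max_left _ _)
      _ ≤ R := neg_abs_le R
      _ ≤ u.im := hb1
  have hP : (-(a:ℂ) ^ 2 * u ^ 2 / 2 + Complex.I * γ * u).re ≤
      1/2 * ((-(a:ℂ) ^ 2 * (u.re:ℂ) ^ 2 / 2 + Complex.I * γ * (u.re:ℂ)).re) +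
      (a ^ 2 * M ^ 2 / 2 + |γ| * M) := by
    rw [hPu, hPt]
    have h1 : u.im ^ 2 ≤ M ^ 2 := by nlinarith [_root_.sq_abs u.im, abs_nonneg u.im]
    have h2 : -(γ * u.im) ≤ |γ| * M := by
      calc -(γ * u.im) ≤ |γ * u.im| := neg_le_abs _
        _ = |γ| * |u.im| := abs_mul _ _
        _ ≤ |γ| * M := mul_le_mul_of_nonneg_left hbM (abs_nonneg γ)
    nlinarith [sq_nonneg (a * u.re), sq_nonneg a]
  -- assemble
  rw [hψ u ⟨hb1, hb2⟩, hψreal u.re]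
  simp only [Complex.add_re] at hP ⊢
  rw [hreu, hret]
  linarith
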